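/- The set of natural numbers n with Cₙ ≡ 0 (mod 3) has asymptotic density 1; that is, the limit as N → ∞ of (1/N)·#{n < N : Cₙ ≡ 0 mod 3} equals 1. -/

import Mathlib

open Filter Finset

/-- positions `< k` where the base-3 digit of `n` is 2 -/
def T3 (n k : ℕ) : Finset ℕ := {i ∈ Finset.range k | n / 3 ^ i % 3 = 2}

lemma digits_sum : ∀ k n : ℕ, n < 3 ^ k →
    ∑ i ∈ Finset.range k, n / 3 ^ i % 3 * 3 ^ i = n := by
  intro k
  induction k with
  | zero => intro n hn; interval_cases n <;> simp
  | succ k ih =>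
    intro n hn
    rw [Finset.sum_range_succ']
    have h : ∀ i, n / 3 ^ (i + 1) = (n / 3) / 3 ^ i := by
      intro i; rw [pow_succ', Nat.div_div_eq_div_mul]
    have h2 : ∑ i ∈ Finset.range k, n / 3 ^ (i + 1) % 3 * 3 ^ (i + 1)
        = 3 * ∑ i ∈ Finset.range k, (n / 3) / 3 ^ i % 3 * 3 ^ i := by
      rw [Finset.mul_sum]
      refine Finset.sum_congr rfl fun i _ => ?_
      rw [h i, pow_succ]; ring
    have hd : n / 3 < 3 ^ k := by
      rw [Nat.div_lt_iff_lt_mul (by norm_num)]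
      calc n < 3 ^ (k+1) := hn
        _ = 3 ^ k * 3 := by ring
    rw [h2, ih _ hd]
    simp [pow_zero]
    omega

lemma twos_dvd_succ {K n : ℕ} (hn : n < 3 ^ K) (h3 : ¬ (3 ∣ catalan n)) :
    3 ^ (T3 n K).card ∣ n + 1 := by
  have hp : Nat.Prime 3 := Nat.prime_three
  have hlog : Nat.log 3 (2 * n) < K + 1 := by
    rcases Nat.eq_zero_or_pos n with rfl | hn0
    · simp
    · exact Nat.log_lt_of_lt_pow (by omega) (by
        calc 2 * n < 2 * 3 ^ K := by omega
          _ < 3 ^ (K + 1) := by rw [pow_succ]; omega)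
  have hem : emultiplicity 3 (Nat.centralBinom n)
      = (({i ∈ Finset.Ico 1 (K+1) | 3 ^ i ≤ n % 3 ^ i + (2 * n - n) % 3 ^ i}).card : ℕ∞) := by
    exact hp.emultiplicity_choose (by omega) hlog
  have hsub : 2 * n - n = n := by omega
  rw [hsub] at hem
  -- card of T3 is at most the carry count
  have hcard : (T3 n K).card ≤
      ({i ∈ Finset.Ico 1 (K+1) | 3 ^ i ≤ n % 3 ^ i + n % 3 ^ i}).card := by
    apply Finset.card_le_card_of_injOn (· + 1)
    · intro i hi
      simp only [T3, Finset.mem_coe, Finset.mem_filter, Finset.mem_range] at hi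
      obtain ⟨hiK, hdig⟩ := hi
      simp only [Finset.mem_coe, Finset.mem_filter, Finset.mem_Ico]
      refine ⟨⟨by omega, by omega⟩, ?_⟩
      have h2 : n % 3 ^ (i + 1) / 3 ^ i = 2 := by
        rw [pow_succ, Nat.mod_mul_right_div_self, hdig]
      have h3' : 2 * 3 ^ i ≤ n % 3 ^ (i + 1) := by
        calc 2 * 3 ^ i = n % 3 ^ (i + 1) / 3 ^ i * 3 ^ i := by rw [h2]
          _ ≤ n % 3 ^ (i + 1) := Nat.div_mul_le_self _ _
      have : (3:ℕ) ^ (i+1) = 3 * 3 ^ i := by rw [pow_succ]; ring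
      omega
    · intro a _ b _ h; simpa using h
  have hmul : (n + 1) * catalan n = Nat.centralBinom n :=
    succ_mul_catalan_eq_centralBinom n
  have hzero : emultiplicity 3 (catalan n) = 0 := emultiplicity_eq_zero.2 h3
  have hle : ((T3 n K).card : ℕ∞) ≤ emultiplicity 3 (n + 1) := by
    have : emultiplicity 3 (Nat.centralBinom n) = emultiplicity 3 (n + 1) := by
      rw [← hmul, emultiplicity_mul hp.prime, hzero, add_zero]
    rw [← this, hem]
    exact_mod_cast hcard
  exact pow_dvd_iff_le_emultiplicity.2 hle

lemma count_few_twos (K j : ℕ) :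
    ({n ∈ Finset.range (3 ^ K) | (T3 n K).card < j}).card ≤
      (∑ i ∈ Finset.range j, K.choose i) * 2 ^ K := by
  classical
  have := Finset.card_le_card_of_injOn
    (fun n => ((T3 n K, fun i : Fin K => if n / 3 ^ (i : ℕ) % 3 = 1 then (1 : Fin 2) else 0) :
      Finset ℕ × (Fin K → Fin 2)))
    (s := {n ∈ Finset.range (3 ^ K) | (T3 n K).card < j})
    (t := ({t ∈ (Finset.range K).powerset | t.card < j}) ×ˢ (Finset.univ : Finset (Fin K → Fin 2)))
    ?_ ?_
  · refine this.trans ?_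
    rw [Finset.card_product, Finset.card_univ]
    simp only [Fintype.card_fun, Fintype.card_fin]
    gcongr
    · calc ({t ∈ (Finset.range K).powerset | t.card < j}).card
          ≤ ((Finset.range j).biUnion fun i => Finset.powersetCard i (Finset.range K)).card := by
            apply Finset.card_le_card
            intro t ht
            simp only [Finset.mem_filter, Finset.mem_powerset] at ht
            simp only [Finset.mem_biUnion, Finset.mem_range, Finset.mem_powersetCard]
            exact ⟨t.card, ht.2, ht.1, rfl⟩
        _ ≤ ∑ i ∈ Finset.range j, (Finset.powersetCard i (Finset.range K)).card :=
            Finset.card_biUnion_le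
        _ = ∑ i ∈ Finset.range j, K.choose i := by
            simp [Finset.card_powersetCard]
  · intro n hn
    simp only [Finset.mem_coe, Finset.mem_filter, Finset.mem_range] at hn
    simp only [Finset.mem_coe, Finset.mem_product, Finset.mem_filter, Finset.mem_powerset, Finset.mem_univ,
      and_true]
    refine ⟨fun i hi => ?_, hn.2⟩
    simp only [T3, Finset.mem_filter] at hi
    exact hi.1
  · intro n hn m hm h
    simp only [Finset.mem_coe, Finset.mem_filter, Finset.mem_range] at hn hm
    have hT : T3 n K = T3 m K := congrArg Prod.fst h
    have hF := congrArg Prod.snd h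
    have hdig : ∀ i, i < K → n / 3 ^ i % 3 = m / 3 ^ i % 3 := by
      intro i hiK
      have hfi := congrFun hF ⟨i, hiK⟩
      simp only at hfi
      have hTn : (i ∈ T3 n K) ↔ n / 3 ^ i % 3 = 2 := by
        simp [T3, Finset.mem_filter, Finset.mem_range, hiK]
      have hTm : (i ∈ T3 m K) ↔ m / 3 ^ i % 3 = 2 := by
        simp [T3, Finset.mem_filter, Finset.mem_range, hiK]
      by_cases h2 : n / 3 ^ i % 3 = 2
      · have : i ∈ T3 m K := hT ▸ hTn.2 h2
        rw [h2, hTm.1 this]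
      · have h2m : ¬ (m / 3 ^ i % 3 = 2) := fun hc => h2 (hTn.1 (hT ▸ hTm.2 hc))
        have hn3 : n / 3 ^ i % 3 < 3 := Nat.mod_lt _ (by norm_num)
        have hm3 : m / 3 ^ i % 3 < 3 := Nat.mod_lt _ (by norm_num)
        by_cases h1 : n / 3 ^ i % 3 = 1
        · rw [h1] at hfi ⊢
          by_cases h1m : m / 3 ^ i % 3 = 1
          · rw [h1m]
          · simp [h1m] at hfi
        · by_cases h1m : m / 3 ^ i % 3 = 1
          · simp [h1, h1m] at hfi
          · omega
    calc n = ∑ i ∈ Finset.range K, n / 3 ^ i % 3 * 3 ^ i := (digits_sum K n hn.1).symm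
      _ = ∑ i ∈ Finset.range K, m / 3 ^ i % 3 * 3 ^ i :=
          Finset.sum_congr rfl fun i hi => by
            rw [hdig i (Finset.mem_range.1 hi)]
      _ = m := digits_sum K m hm.1

lemma count_dvd_pow (N j : ℕ) :
    ({n ∈ Finset.range N | 3 ^ j ∣ n + 1}).card ≤ N / 3 ^ j + 1 := by
  have h := Finset.card_le_card_of_injOn (fun n => (n + 1) / 3 ^ j)
    (s := {n ∈ Finset.range N | 3 ^ j ∣ n + 1}) (t := Finset.range (N / 3 ^ j + 1)) ?_ ?_
  · simpa using h
  · intro n hn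
    simp only [Finset.mem_coe, Finset.mem_filter, Finset.mem_range] at hn ⊢
    have : (n + 1) / 3 ^ j ≤ N / 3 ^ j := Nat.div_le_div_right (by omega)
    omega
  · intro n hn m hm hnm
    simp only [Finset.mem_coe, Finset.mem_filter, Finset.mem_range] at hn hm
    have h1 : 3 ^ j * ((n + 1) / 3 ^ j) = n + 1 := Nat.mul_div_cancel' hn.2
    have h2 : 3 ^ j * ((m + 1) / 3 ^ j) = m + 1 := Nat.mul_div_cancel' hm.2
    simp only at hnm
    rw [hnm] at h1
    omega

lemma bad_card_le (N j : ℕ) :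
    ({n ∈ Finset.range N | ¬ 3 ∣ catalan n}).card ≤
      N / 3 ^ j + 1 + j * (Nat.clog 3 N + 1) ^ j * 2 ^ (Nat.clog 3 N) := by
  classical
  set K := Nat.clog 3 N with hK
  have hNK : N ≤ 3 ^ K := Nat.le_pow_clog (by norm_num) N
  have hsub : {n ∈ Finset.range N | ¬ 3 ∣ catalan n} ⊆
      {n ∈ Finset.range N | 3 ^ j ∣ n + 1} ∪ {n ∈ Finset.range (3 ^ K) | (T3 n K).card < j} := by
    intro n hn
    simp only [Finset.mem_filter, Finset.mem_range] at hn
    have hdvd : 3 ^ (T3 n K).card ∣ n + 1 := twos_dvd_succ (by omega) hn.2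
    by_cases hc : (T3 n K).card < j
    · exact Finset.mem_union_right _ (by simp [Finset.mem_filter, Finset.mem_range]; omega)
    · refine Finset.mem_union_left _ ?_
      simp only [Finset.mem_filter, Finset.mem_range]
      exact ⟨hn.1, dvd_trans (pow_dvd_pow 3 (by omega)) hdvd⟩
  calc ({n ∈ Finset.range N | ¬ 3 ∣ catalan n}).card
      ≤ ({n ∈ Finset.range N | 3 ^ j ∣ n + 1}).card
        + ({n ∈ Finset.range (3 ^ K) | (T3 n K).card < j}).card :=
        (Finset.card_le_card hsub).trans (Finset.card_union_le _ _)
    _ ≤ (N / 3 ^ j + 1) + (∑ i ∈ Finset.range j, K.choose i) * 2 ^ K := by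
        gcongr
        · exact count_dvd_pow N j
        · exact count_few_twos K j
    _ ≤ N / 3 ^ j + 1 + j * (K + 1) ^ j * 2 ^ K := by
        have : ∑ i ∈ Finset.range j, K.choose i ≤ j * (K + 1) ^ j := by
          calc ∑ i ∈ Finset.range j, K.choose i ≤ ∑ _i ∈ Finset.range j, (K + 1) ^ j := by
                refine Finset.sum_le_sum fun i hi => ?_
                calc K.choose i ≤ K ^ i := Nat.choose_le_pow K i
                  _ ≤ (K + 1) ^ i := Nat.pow_le_pow_left (by omega) i
                  _ ≤ (K + 1) ^ j := Nat.pow_le_pow_right (by omega)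
                      (le_of_lt (Finset.mem_range.1 hi))
            _ = j * (K + 1) ^ j := by simp [mul_comm]
        exact Nat.add_le_add_left (Nat.mul_le_mul_right _ this) _

lemma pow_clog_le_three_mul (N : ℕ) (hN : 1 ≤ N) : 3 ^ Nat.clog 3 N ≤ 3 * N := by
  rcases eq_or_lt_of_le hN with h | h
  · rw [← h]; simp [Nat.clog_one_right]
  · have h1 : 3 ^ (Nat.clog 3 N - 1) < N := Nat.pow_pred_clog_lt_self (by norm_num) h
    have h2 : 0 < Nat.clog 3 N := Nat.clog_pos (by norm_num) h
    have h3 : 3 ^ Nat.clog 3 N = 3 * 3 ^ (Nat.clog 3 N - 1) := by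
      conv_lhs => rw [show Nat.clog 3 N = (Nat.clog 3 N - 1) + 1 by omega]
      rw [pow_succ]; ring
    omega

lemma bad_ratio_le (N j : ℕ) (hN : 1 ≤ N) :
    (({n ∈ Finset.range N | ¬ 3 ∣ catalan n}).card : ℝ) / N ≤
      (1/3) ^ j + 1/N + (3 * j * ((Nat.clog 3 N : ℝ) + 1) ^ j) * (2/3) ^ Nat.clog 3 N := by
  set K := Nat.clog 3 N with hK
  have hNpos : (0:ℝ) < N := by exact_mod_cast hN
  rw [div_le_iff₀ hNpos]
  have hcard := bad_card_le N j
  have hcast : (({n ∈ Finset.range N | ¬ 3 ∣ catalan n}).card : ℝ) ≤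
      ((N / 3 ^ j : ℕ) : ℝ) + 1 + (j : ℝ) * ((K : ℝ) + 1) ^ j * 2 ^ K := by
    exact_mod_cast hcard
  refine hcast.trans ?_
  have h1 : ((N / 3 ^ j : ℕ) : ℝ) ≤ (1/3) ^ j * N := by
    calc ((N / 3 ^ j : ℕ) : ℝ) ≤ (N : ℝ) / (3 ^ j : ℕ) := Nat.cast_div_le
      _ = (1/3) ^ j * N := by
        push_cast
        rw [div_pow, one_pow]
        ring
  have h2 : (1 : ℝ) ≤ 1/N * N := by rw [one_div_mul_cancel hNpos.ne']
  have h3 : (j : ℝ) * ((K : ℝ) + 1) ^ j * 2 ^ K ≤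
      (3 * j * ((K : ℝ) + 1) ^ j) * (2/3) ^ K * N := by
    have hpow : (3:ℝ) ^ K ≤ 3 * N := by
      exact_mod_cast pow_clog_le_three_mul N hN
    have h2K : (2:ℝ) ^ K ≤ 3 * (2/3) ^ K * N := by
      have h3Kpos : (0:ℝ) < 3 ^ K := by positivity
      rw [div_pow, show (3:ℝ) * ((2:ℝ)^K/(3:ℝ)^K) * N = 2^K * (3*N) / 3^K by ring,
        le_div_iff₀ h3Kpos]
      gcongr
    calc (j : ℝ) * ((K : ℝ) + 1) ^ j * 2 ^ K
        ≤ (j : ℝ) * ((K : ℝ) + 1) ^ j * (3 * (2/3) ^ K * N) := by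
          gcongr
      _ = (3 * j * ((K : ℝ) + 1) ^ j) * (2/3) ^ K * N := by ring
  calc ((N / 3 ^ j : ℕ) : ℝ) + 1 + (j : ℝ) * ((K : ℝ) + 1) ^ j * 2 ^ K
      ≤ (1/3) ^ j * N + 1/N * N + (3 * j * ((K : ℝ) + 1) ^ j) * (2/3) ^ K * N := by
        gcongr
    _ = ((1/3) ^ j + 1/N + (3 * j * ((K : ℝ) + 1) ^ j) * (2/3) ^ K) * N := by ring

lemma clog_tendsto : Tendsto (fun N : ℕ => Nat.clog 3 N) atTop atTop := by
  apply Filter.tendsto_atTop_atTop.2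
  intro b
  refine ⟨3 ^ b, fun N hN => ?_⟩
  calc b = Nat.clog 3 (3 ^ b) := (Nat.clog_pow 3 b (by norm_num)).symm
    _ ≤ Nat.clog 3 N := Nat.clog_mono_right 3 hN

lemma bad_tendsto :
    Tendsto (fun N : ℕ => (({n ∈ Finset.range N | ¬ 3 ∣ catalan n}).card : ℝ) / N)
      atTop (nhds 0) := by
  rw [Metric.tendsto_atTop]
  intro ε hε
  obtain ⟨j, hj⟩ := exists_pow_lt_of_lt_one (show (0:ℝ) < ε/2 by linarith)
    (show (1:ℝ)/3 < 1 by norm_num)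
  have hgeom : Tendsto (fun K : ℕ => (3 * (j:ℝ) * ((K:ℝ)+1)^j) * (2/3)^K) atTop (nhds 0) := by
    have h0 : Tendsto (fun n : ℕ => (n:ℝ)^j * (2/3)^n) atTop (nhds 0) :=
      tendsto_pow_const_mul_const_pow_of_lt_one j (by norm_num) (by norm_num)
    have h1 : Tendsto (fun K : ℕ => ((K:ℝ)+1)^j * (2/3)^(K+1)) atTop (nhds 0) := by
      have := h0.comp (tendsto_add_atTop_nat 1)
      have heq2 : ((fun n : ℕ => (n:ℝ)^j * (2/3)^n) ∘ fun a => a + 1)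
          = fun K : ℕ => ((K:ℝ)+1)^j * (2/3)^(K+1) := by
        funext K; simp only [Function.comp_apply]; push_cast; ring
      rwa [heq2] at this
    have h2 := h1.const_mul ((3:ℝ) * j * (3/2))
    have heq : (fun K : ℕ => (3 * (j:ℝ) * ((K:ℝ)+1)^j) * (2/3)^K)
        = fun K : ℕ => ((3:ℝ) * j * (3/2)) * (((K:ℝ)+1)^j * (2/3)^(K+1)) := by
      funext K; rw [pow_succ]; ring
    rw [heq]
    simpa using h2
  have htail : Tendsto (fun N : ℕ =>
      1/(N:ℝ) + (3 * (j:ℝ) * ((Nat.clog 3 N : ℝ)+1)^j) * (2/3)^(Nat.clog 3 N))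
      atTop (nhds 0) := by
    have := tendsto_one_div_atTop_nhds_zero_nat.add (hgeom.comp clog_tendsto)
    simpa [Function.comp] using this
  have hev : ∀ᶠ N : ℕ in atTop,
      1/(N:ℝ) + (3 * (j:ℝ) * ((Nat.clog 3 N : ℝ)+1)^j) * (2/3)^(Nat.clog 3 N)
        < ε - (1/3)^j := by
    apply htail.eventually_lt_const
    have hjpos : (0:ℝ) < (1/3:ℝ)^j := by positivity
    linarith
  obtain ⟨M, hM⟩ := Filter.eventually_atTop.1 (hev.and (eventually_ge_atTop 1))
  refine ⟨M, fun N hN => ?_⟩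
  obtain ⟨h1, h2⟩ := hM N hN
  rw [Real.dist_eq, sub_zero, abs_of_nonneg (by positivity)]
  calc (({n ∈ Finset.range N | ¬ 3 ∣ catalan n}).card : ℝ) / N
      ≤ (1/3) ^ j + 1/(N:ℝ)
        + (3 * (j:ℝ) * ((Nat.clog 3 N : ℝ) + 1) ^ j) * (2/3) ^ Nat.clog 3 N :=
        bad_ratio_le N j h2
    _ < (1/3) ^ j + (ε - (1/3) ^ j) := by linarith
    _ = ε := by ring


/-- The set of `n` with `Cₙ ≡ 0 (mod 3)` has asymptotic density 1. -/
theorem catalan_modEq_zero_three_density_one :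
    Tendsto (fun N : ℕ => ({n : ℕ | n < N ∧ catalan n ≡ 0 [MOD 3]}.ncard : ℝ) / N)
      atTop (nhds 1) := by
  classical
  have hset : ∀ N : ℕ, {n : ℕ | n < N ∧ catalan n ≡ 0 [MOD 3]}.ncard
      = ({n ∈ Finset.range N | 3 ∣ catalan n}).card := by
    intro N
    have : {n : ℕ | n < N ∧ catalan n ≡ 0 [MOD 3]}
        = ↑({n ∈ Finset.range N | 3 ∣ catalan n}) := by
      ext n
      simp [Nat.modEq_zero_iff_dvd]
    rw [this, Set.ncard_coe_finset]
  have hsplit : ∀ N : ℕ, ({n ∈ Finset.range N | 3 ∣ catalan n}).card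
      = N - ({n ∈ Finset.range N | ¬ 3 ∣ catalan n}).card := by
    intro N
    have := Finset.card_filter_add_card_filter_not
      (s := Finset.range N) (p := fun n => 3 ∣ catalan n)
    simp only [Finset.card_range] at this
    omega
  have hbadle : ∀ N : ℕ, ({n ∈ Finset.range N | ¬ 3 ∣ catalan n}).card ≤ N := fun N =>
    (Finset.card_filter_le _ _).trans_eq (Finset.card_range N)
  have hmain : Tendsto
      (fun N : ℕ => 1 - (({n ∈ Finset.range N | ¬ 3 ∣ catalan n}).card : ℝ) / N)
      atTop (nhds 1) := by
    have := bad_tendsto.const_sub 1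
    simpa using this
  refine hmain.congr' ?_
  filter_upwards [eventually_ge_atTop 1] with N hN
  have hNpos : (0:ℝ) < N := by exact_mod_cast hN
  rw [hset, hsplit]
  rw [Nat.cast_sub (hbadle N)]
  field_simp
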